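/- Let R be a computably enumerable equivalence relation on ℕ. Then the following are equivalent: (1) for all a, b ∈ ℕ with ¬R a b, the equivalence classes {n | R n a} and {n | R n b} are recursively inseparable, i.e., there is no computable function C : ℕ → Bool with C n = true for all n with R n a and C n = false for all n with R n b; (2) for every computable function g : ℕ → Bool there exists a Boolean value v such that for every n ∈ ℕ there exists m with R n m and g m = v. -/

import Mathlib

/-- For a computably enumerable equivalence relation `R` on `ℕ`, the following are
equivalent: (1) any two distinct equivalence classes of `R` are recursively inseparable;
(2) for every computable `g : ℕ → Bool` there is a boolean `v` such that every
equivalence class contains a representative `m` with `g m = v`. -/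
theorem ceer_inseparable_iff_constant_choice
    (R : ℕ → ℕ → Prop) (hR : Equivalence R)
    (hce : REPred (fun p : ℕ × ℕ => R p.1 p.2)) :
    (∀ a b : ℕ, ¬ R a b →
        ¬ ∃ C : ℕ → Bool, Computable C ∧
            (∀ n : ℕ, R n a → C n = true) ∧ (∀ n : ℕ, R n b → C n = false)) ↔
    (∀ g : ℕ → Bool, Computable g →
        ∃ v : Bool, ∀ n : ℕ, ∃ m : ℕ, R n m ∧ g m = v) := by
  constructor
  · intro h g hg
    by_contra hcon
    push_neg at hcon
    obtain ⟨n₀, hn₀⟩ := hcon true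
    obtain ⟨n₁, hn₁⟩ := hcon false
    -- every m equivalent to n₀ has g m = false, every m equivalent to n₁ has g m = true
    have h0 : ∀ m, R n₀ m → g m = false := by
      intro m hm
      have := hn₀ m hm
      simpa using this
    have h1 : ∀ m, R n₁ m → g m = true := by
      intro m hm
      have := hn₁ m hm
      simpa using this
    have hne : ¬ R n₁ n₀ := by
      intro hr
      have := h1 n₀ hr
      have := h0 n₀ (hR.refl n₀)
      simp_all
    exact h n₁ n₀ hne ⟨g, hg, fun n hn => h1 n (hR.symm hn), fun n hn => h0 n (hR.symm hn)⟩
  · intro h a b hab ⟨C, hC, hCa, hCb⟩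
    obtain ⟨v, hv⟩ := h C hC
    obtain ⟨m, hm, hgm⟩ := hv a
    obtain ⟨m', hm', hgm'⟩ := hv b
    have : v = true := hgm ▸ hCa m (hR.symm hm)
    have : v = false := hgm' ▸ hCb m' (hR.symm hm')
    simp_all
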